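/- Let n ≥ 1 and d, d₁, d₂ be integers with 1 ≤ d₂ ≤ d₁ < d; set a = n(d − d₁) and m = n(2d − d₁ − d₂). Choose integers h_j with a − j ≤ h_j ≤ a + j − 1 for j ∈ {1,…,a−1}, integers g_j with 0 ≤ g_j ≤ a + j − 1 for j ∈ {a,…,n(d−d₂)−1}, and integers p_j with 0 ≤ p_j ≤ m − 1 for j ∈ {n(d−d₂),…,nd−1}. Then the multiset consisting of the one-point interval [a, a], the intervals [a − j, h_j] and [h_j + 1, a + j] for j = 1,…,a−1, the intervals [0, g_j] and [g_j + 1, a + j] for j = a,…,n(d−d₂)−1, and the intervals [0, p_j] and [p_j + 1, m] for j = n(d−d₂),…,nd−1, is a proper system with parameters m = n(2d − d₁ − d₂) and σ(i) = min(n d₁ + i, m + n d₂ − i), consisting of exactly 2nd − 1 intervals. -/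

import Mathlib

/-- `IsProperSystem m σ S` : `S` is a *proper system* with parameters `(m, σ)`, i.e. a finite
multiset of closed intervals `[a,b]` with integer endpoints (encoded as pairs `(a,b)` of
integers, one-point intervals `a = b` allowed) contained in `[0,m]`, such that for every
integer `i ∈ [0,m]` the number of intervals of `S` containing `i`, counted with multiplicity,
equals `σ i`. -/
def IsProperSystem (m : ℤ) (σ : ℤ → ℕ) (S : Multiset (ℤ × ℤ)) : Prop :=
  (∀ I ∈ S, 0 ≤ I.1 ∧ I.1 ≤ I.2 ∧ I.2 ≤ m) ∧
  ∀ i : ℤ, 0 ≤ i → i ≤ m →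
    (S.filter fun I => I.1 ≤ i ∧ i ≤ I.2).card = σ i

/-- The *graph* of a system of intervals in `[0,m]` enumerated (with multiplicity) by
`f : Fin t → ℤ × ℤ` : its vertices are the `t` intervals (`Sum.inl j` is the `j`-th interval)
together with `m` additional vertices `w_0, …, w_{m-1}` (`Sum.inr i` is `w_i`), and `w_i` is
adjacent exactly to the intervals whose right endpoint is `i` and to the intervals whose
left endpoint is `i + 1`. -/
def systemGraph (m : ℕ) {t : ℕ} (f : Fin t → ℤ × ℤ) : SimpleGraph (Fin t ⊕ Fin m) :=
  SimpleGraph.fromRel fun u v =>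
    match u, v with
    | Sum.inl j, Sum.inr i => (f j).2 = (i : ℤ) ∨ (f j).1 = (i : ℤ) + 1
    | _, _ => False

/-- A multiset of intervals in `[0,m]` is *admissible* if its graph is a tree.  (The graph is
independent, up to isomorphism, of the chosen enumeration of the multiset.) -/
def IsAdmissible (m : ℕ) (S : Multiset (ℤ × ℤ)) : Prop :=
  ∃ (t : ℕ) (f : Fin t → ℤ × ℤ), (List.ofFn f : Multiset (ℤ × ℤ)) = S ∧
    (systemGraph m f).IsTree

/-- `IsMarkedSystem m σ t M` : `M` is a *marked admissible proper system* with parameters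
`(m, σ)` consisting of exactly `t` intervals: a finite multiset of pairs `(I, p)` where `p`
is an integer point of the interval `I`, whose multiset of first components is an admissible
proper system with parameters `(m, σ)` consisting of `t` intervals. -/
def IsMarkedSystem (m : ℕ) (σ : ℤ → ℕ) (t : ℕ) (M : Multiset ((ℤ × ℤ) × ℤ)) : Prop :=
  (∀ p ∈ M, p.1.1 ≤ p.2 ∧ p.2 ≤ p.1.2) ∧
  IsProperSystem m σ (M.map Prod.fst) ∧
  IsAdmissible m (M.map Prod.fst) ∧
  M.card = t

private lemma filterBind (s : Multiset ℕ) (f : ℕ → Multiset (ℤ × ℤ))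
    (P : ℤ × ℤ → Prop) [DecidablePred P] :
    (s.bind f).filter P = s.bind fun a => (f a).filter P := by
  induction s using Multiset.induction with
  | empty => simp
  | cons a s ih => simp [ih]

private lemma cardFilterPair (P : ℤ × ℤ → Prop) [DecidablePred P] (x y : ℤ × ℤ) :
    (({x, y} : Multiset (ℤ × ℤ)).filter P).card
      = (if P x then 1 else 0) + (if P y then 1 else 0) := by
  rw [show ({x, y} : Multiset (ℤ × ℤ)) = x ::ₘ {y} from rfl, Multiset.filter_cons,
    Multiset.filter_singleton]
  split_ifs <;> simp

private lemma sumIndicator (lo hi lo' : ℕ) (cond : ℕ → Prop) [DecidablePred cond]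
    (hc : ∀ j, lo ≤ j → j ≤ hi → (cond j ↔ lo' ≤ j)) :
    (∑ j ∈ Finset.Icc lo hi, if cond j then 1 else 0) = hi + 1 - max lo lo' := by
  rw [← Finset.card_filter]
  rw [show (Finset.Icc lo hi).filter cond = Finset.Icc (max lo lo') hi by
    ext x
    simp only [Finset.mem_filter, Finset.mem_Icc]
    constructor
    · rintro ⟨⟨h1, h2⟩, hcx⟩
      rw [hc x h1 h2] at hcx
      omega
    · rintro ⟨h1, h2⟩
      refine ⟨⟨by omega, h2⟩, (hc x (by omega) h2).mpr (by omega)⟩]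
  exact Nat.card_Icc _ _


/-- Let `n ≥ 1` and `1 ≤ d₂ ≤ d₁ < d`; set `a = n(d - d₁)` and
`m = n(2d - d₁ - d₂)`.  Choose integers `h j` with `a - j ≤ h j ≤ a + j - 1` for
`j ∈ {1, …, a-1}`, integers `g j` with `0 ≤ g j ≤ a + j - 1` for `j ∈ {a, …, n(d-d₂)-1}`,
and integers `p j` with `0 ≤ p j ≤ m - 1` for `j ∈ {n(d-d₂), …, nd-1}`.  Then the multiset
consisting of the one-point interval `[a, a]`, the intervals `[a - j, h j]` and
`[h j + 1, a + j]` for `j = 1, …, a-1`, the intervals `[0, g j]` and `[g j + 1, a + j]` for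
`j = a, …, n(d-d₂)-1`, and the intervals `[0, p j]` and `[p j + 1, m]` for
`j = n(d-d₂), …, nd-1`, is a proper system with parameters `m = n(2d - d₁ - d₂)` and
`σ(i) = min(n d₁ + i, m + n d₂ - i)`, consisting of exactly `2nd - 1` intervals. -/
theorem statement9 (n d d₁ d₂ : ℕ) (hn : 1 ≤ n) (hd₂ : 1 ≤ d₂) (hd₁ : d₂ ≤ d₁)
    (hd : d₁ < d) (h g p : ℕ → ℤ)
    (hh : ∀ j : ℕ, 1 ≤ j → j ≤ n * (d - d₁) - 1 →
      (n * (d - d₁) : ℤ) - j ≤ h j ∧ h j ≤ (n * (d - d₁) : ℤ) + j - 1)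
    (hg : ∀ j : ℕ, n * (d - d₁) ≤ j → j ≤ n * (d - d₂) - 1 →
      0 ≤ g j ∧ g j ≤ (n * (d - d₁) : ℤ) + j - 1)
    (hp : ∀ j : ℕ, n * (d - d₂) ≤ j → j ≤ n * d - 1 →
      0 ≤ p j ∧ p j ≤ (n * (2 * d - d₁ - d₂) : ℤ) - 1) :
    IsProperSystem (n * (2 * d - d₁ - d₂))
        (fun i : ℤ =>
          (min ((n : ℤ) * d₁ + i)
            ((n * (2 * d - d₁ - d₂) : ℕ) + (n : ℤ) * d₂ - i)).toNat)
        (((n * (d - d₁) : ℤ), (n * (d - d₁) : ℤ)) ::ₘ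
          ((((Finset.Icc 1 (n * (d - d₁) - 1)).val.bind fun j =>
              {((n * (d - d₁) : ℤ) - j, h j), (h j + 1, (n * (d - d₁) : ℤ) + j)}) +
            ((Finset.Icc (n * (d - d₁)) (n * (d - d₂) - 1)).val.bind fun j =>
              {((0 : ℤ), g j), (g j + 1, (n * (d - d₁) : ℤ) + j)})) +
            ((Finset.Icc (n * (d - d₂)) (n * d - 1)).val.bind fun j =>
              {((0 : ℤ), p j), (p j + 1, (n * (2 * d - d₁ - d₂) : ℤ))}))) ∧
      (((n * (d - d₁) : ℤ), (n * (d - d₁) : ℤ)) ::ₘ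
          ((((Finset.Icc 1 (n * (d - d₁) - 1)).val.bind fun j =>
              {((n * (d - d₁) : ℤ) - j, h j), (h j + 1, (n * (d - d₁) : ℤ) + j)}) +
            ((Finset.Icc (n * (d - d₁)) (n * (d - d₂) - 1)).val.bind fun j =>
              {((0 : ℤ), g j), (g j + 1, (n * (d - d₁) : ℤ) + j)})) +
            ((Finset.Icc (n * (d - d₂)) (n * d - 1)).val.bind fun j =>
              {((0 : ℤ), p j), (p j + 1, (n * (2 * d - d₁ - d₂) : ℤ))}))).card =
        2 * (n * d) - 1 := by
  have cA : (n : ℤ) * ((d : ℤ) - (d₁ : ℤ)) = ((n * (d - d₁) : ℕ) : ℤ) := by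
    push_cast [Nat.cast_sub hd.le]; ring
  have cM : (n : ℤ) * (2 * (d : ℤ) - (d₁ : ℤ) - (d₂ : ℤ))
      = ((n * (2 * d - d₁ - d₂) : ℕ) : ℤ) := by
    push_cast [Nat.cast_sub (show d₁ ≤ 2 * d by omega),
      Nat.cast_sub (show d₂ ≤ 2 * d - d₁ by omega)]; ring
  have cD1 : (n : ℤ) * (d₁ : ℤ) = ((n * d₁ : ℕ) : ℤ) := by push_cast; ring
  have cD2 : (n : ℤ) * (d₂ : ℤ) = ((n * d₂ : ℕ) : ℤ) := by push_cast; ring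
  have rAC : n * (d - d₁) + n * d₁ = n * d := by
    rw [← Nat.mul_add, Nat.sub_add_cancel hd.le]
  have rBC : n * (d - d₂) + n * d₂ = n * d := by
    rw [← Nat.mul_add, Nat.sub_add_cancel (by omega)]
  have rM : n * (d - d₁) + n * (d - d₂) = n * (2 * d - d₁ - d₂) := by
    rw [← Nat.mul_add]; congr 1; omega
  have rA1 : 1 ≤ n * (d - d₁) := Nat.mul_pos (by omega) (by omega)
  have rAB : n * (d - d₁) ≤ n * (d - d₂) := Nat.mul_le_mul_left n (by omega)
  have rD2 : 1 ≤ n * d₂ := Nat.mul_pos (by omega) (by omega)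
  refine ⟨⟨?_, ?_⟩, ?_⟩
  · -- interval bounds
    intro I hI
    simp only [Multiset.mem_cons, Multiset.mem_add, Multiset.mem_bind, Finset.mem_val,
      Finset.mem_Icc, Multiset.insert_eq_cons, Multiset.mem_cons,
      Multiset.mem_singleton] at hI
    rw [cM]
    rcases hI with hI | ((⟨j, hj, hI | hI⟩ | ⟨j, hj, hI | hI⟩) | ⟨j, hj, hI | hI⟩)
    · subst hI; dsimp only; rw [cA]; omega
    · obtain ⟨b1, b2⟩ := hh j hj.1 hj.2
      rw [cA] at b1 b2; subst hI; dsimp only; rw [cA]; omega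
    · obtain ⟨b1, b2⟩ := hh j hj.1 hj.2
      rw [cA] at b1 b2; subst hI; dsimp only; rw [cA]; omega
    · obtain ⟨b1, b2⟩ := hg j hj.1 hj.2
      rw [cA] at b2; subst hI; dsimp only; omega
    · obtain ⟨b1, b2⟩ := hg j hj.1 hj.2
      rw [cA] at b2; subst hI; dsimp only; rw [cA]; omega
    · obtain ⟨b1, b2⟩ := hp j hj.1 hj.2
      rw [cM] at b2; subst hI; dsimp only; omega
    · obtain ⟨b1, b2⟩ := hp j hj.1 hj.2
      rw [cM] at b2; subst hI; dsimp only; rw [cM]; omega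
  · -- the counting
    intro i hi0 him
    rw [cM] at him
    have ht : ((i.toNat : ℤ)) = i := Int.toNat_of_nonneg hi0
    simp only [cA, cM, cD1, cD2]
    rw [Multiset.filter_cons, Multiset.filter_add, Multiset.filter_add,
      filterBind, filterBind, filterBind, Multiset.card_add, Multiset.card_add,
      Multiset.card_add, Multiset.card_bind, Multiset.card_bind, Multiset.card_bind,
      apply_ite Multiset.card, Multiset.card_singleton, Multiset.card_zero,
      Function.comp_def,
      ← Finset.sum_eq_multiset_sum, ← Finset.sum_eq_multiset_sum, ← Finset.sum_eq_multiset_sum]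
    have T1 : (∑ j ∈ Finset.Icc 1 (n * (d - d₁) - 1),
        (Multiset.filter (fun I => I.1 ≤ i ∧ i ≤ I.2)
          {(((n * (d - d₁) : ℕ) : ℤ) - j, h j), (h j + 1, ((n * (d - d₁) : ℕ) : ℤ) + j)}).card)
        = (n * (d - d₁) - 1) + 1
            - max 1 (max (n * (d - d₁) - i.toNat) (i.toNat - n * (d - d₁))) := by
      rw [Finset.sum_congr rfl (g := fun j =>
          if max (n * (d - d₁) - i.toNat) (i.toNat - n * (d - d₁)) ≤ j then 1 else 0)
        (fun j hj => by
          obtain ⟨hj1, hj2⟩ := Finset.mem_Icc.mp hj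
          obtain ⟨b1, b2⟩ := hh j hj1 hj2
          rw [cA] at b1 b2
          rw [cardFilterPair]
          dsimp only
          split_ifs <;> omega)]
      exact sumIndicator _ _ _ _ (fun j _ _ => Iff.rfl)
    have T2 : (∑ j ∈ Finset.Icc (n * (d - d₁)) (n * (d - d₂) - 1),
        (Multiset.filter (fun I => I.1 ≤ i ∧ i ≤ I.2)
          {((0 : ℤ), g j), (g j + 1, ((n * (d - d₁) : ℕ) : ℤ) + j)}).card)
        = (n * (d - d₂) - 1) + 1 - max (n * (d - d₁)) (i.toNat - n * (d - d₁)) := by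
      rw [Finset.sum_congr rfl (g := fun j =>
          if i.toNat - n * (d - d₁) ≤ j then 1 else 0)
        (fun j hj => by
          obtain ⟨hj1, hj2⟩ := Finset.mem_Icc.mp hj
          obtain ⟨b1, b2⟩ := hg j hj1 hj2
          rw [cA] at b2
          rw [cardFilterPair]
          dsimp only
          split_ifs <;> omega)]
      exact sumIndicator _ _ _ _ (fun j _ _ => Iff.rfl)
    have T3 : (∑ j ∈ Finset.Icc (n * (d - d₂)) (n * d - 1),
        (Multiset.filter (fun I => I.1 ≤ i ∧ i ≤ I.2)
          {((0 : ℤ), p j), (p j + 1, ((n * (2 * d - d₁ - d₂) : ℕ) : ℤ))}).card)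
        = (n * d - 1) + 1 - max (n * (d - d₂)) 0 := by
      rw [Finset.sum_congr rfl (g := fun j => if 0 ≤ j then 1 else 0)
        (fun j hj => by
          obtain ⟨hj1, hj2⟩ := Finset.mem_Icc.mp hj
          obtain ⟨b1, b2⟩ := hp j hj1 hj2
          rw [cM] at b2
          rw [cardFilterPair]
          dsimp only
          split_ifs <;> omega)]
      exact sumIndicator _ _ _ _ (fun j _ _ => Iff.rfl)
    simp only [Function.comp_apply] at *
    rw [T1, T2, T3]
    split_ifs <;> omega
  · -- cardinality
    have pc : ∀ x y : ℤ × ℤ, ({x, y} : Multiset (ℤ × ℤ)).card = 2 := fun x y => rfl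
    simp only [Multiset.card_cons, Multiset.card_add, Multiset.card_bind, Function.comp_def,
      pc, Multiset.map_const', Multiset.sum_replicate, smul_eq_mul, Finset.card_val,
      Nat.card_Icc]
    omega
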